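/- Let λ ∈ (0,1). Then each of the three quantities 1/(λ^{λ/2}(2−λ)^{1−λ/2}), (1+λ)^{1+λ}/(λ^λ 2^{1+λ}), and (3−λ)^{3−λ}/((2−λ)^{2−λ} 2^{3−λ}) lies strictly in the interval (0,1). -/

import Mathlib

open Real

/-- Lower bound on log: `1 - 1/y < log y` for positive `y ≠ 1`. -/
lemma key_log_lb (y : ℝ) (hy : 0 < y) (hy1 : y ≠ 1) : 1 - 1 / y < Real.log y := by
  have h := Real.log_lt_sub_one_of_pos (x := 1 / y) (by positivity)
    (by simp [hy1, ne_of_gt hy, div_eq_one_iff_eq (ne_of_gt hy)])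
  rw [one_div, Real.log_inv] at h
  have : 1 / y = y⁻¹ := one_div y
  linarith [h]

/-- Key inequality: for `x > 0`, `x ≠ 1`,
`(1+x) log(1+x) < x log x + (1+x) log 2`. -/
lemma key_g (x : ℝ) (hx : 0 < x) (hx1 : x ≠ 1) :
    (1 + x) * Real.log (1 + x) < x * Real.log x + (1 + x) * Real.log 2 := by
  have h1x : (0:ℝ) < 1 + x := by linarith
  have k1 : Real.log ((1 + x) / (2 * x)) < (1 + x) / (2 * x) - 1 :=
    Real.log_lt_sub_one_of_pos (by positivity) (by
      intro h; rw [div_eq_one_iff_eq (by positivity)] at h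
      apply hx1; linarith)
  have k2 : Real.log ((1 + x) / 2) < (1 + x) / 2 - 1 :=
    Real.log_lt_sub_one_of_pos (by positivity) (by
      intro h; rw [div_eq_one_iff_eq (by norm_num : (2:ℝ) ≠ 0)] at h
      apply hx1; linarith)
  rw [Real.log_div (by positivity) (by positivity),
    Real.log_mul (by norm_num) (ne_of_gt hx)] at k1
  rw [Real.log_div (by positivity) (by norm_num)] at k2
  have k1' : x * (Real.log (1 + x) - (Real.log 2 + Real.log x)) <
      x * ((1 + x) / (2 * x) - 1) := by
    exact mul_lt_mul_of_pos_left k1 hx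
  have hxne : x ≠ 0 := ne_of_gt hx
  have hrw : x * ((1 + x) / (2 * x) - 1) = (1 + x) / 2 - x := by
    field_simp
  rw [hrw] at k1'
  nlinarith [k1', k2]

theorem stirling_rates_in_unit_interval (l : ℝ) (hl : l ∈ Set.Ioo (0 : ℝ) 1) :
    (1 / (l ^ (l / 2) * (2 - l) ^ (1 - l / 2)) ∈ Set.Ioo (0 : ℝ) 1) ∧
    ((1 + l) ^ (1 + l) / (l ^ l * (2 : ℝ) ^ (1 + l)) ∈ Set.Ioo (0 : ℝ) 1) ∧
    ((3 - l) ^ (3 - l) / ((2 - l) ^ (2 - l) * (2 : ℝ) ^ (3 - l)) ∈ Set.Ioo (0 : ℝ) 1) := by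
  obtain ⟨hl0, hl1⟩ := hl
  have hl2 : (0:ℝ) < 2 - l := by linarith
  have hlne1 : l ≠ 1 := ne_of_lt hl1
  -- Quantity 1
  have hA : (1:ℝ) < l ^ (l / 2) * (2 - l) ^ (1 - l / 2) := by
    have hApos : (0:ℝ) < l ^ (l / 2) * (2 - l) ^ (1 - l / 2) := by positivity
    rw [← Real.log_pos_iff hApos.le, Real.log_mul (by positivity) (by positivity),
      Real.log_rpow hl0, Real.log_rpow hl2]
    have k1 : 1 - 1 / l < Real.log l := key_log_lb l hl0 hlne1
    have k2 : 1 - 1 / (2 - l) < Real.log (2 - l) :=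
      key_log_lb (2 - l) hl2 (by intro h; apply hlne1; linarith)
    have m1 : (l / 2) * (1 - 1 / l) < (l / 2) * Real.log l :=
      mul_lt_mul_of_pos_left k1 (by linarith)
    have m2 : (1 - l / 2) * (1 - 1 / (2 - l)) < (1 - l / 2) * Real.log (2 - l) :=
      mul_lt_mul_of_pos_left k2 (by linarith)
    have e1 : (l / 2) * (1 - 1 / l) = l / 2 - 1 / 2 := by
      field_simp
    have e2 : (1 - l / 2) * (1 - 1 / (2 - l)) = 1 / 2 - l / 2 := by
      field_simp; ring
    rw [e1] at m1; rw [e2] at m2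
    linarith
  have part1 : 1 / (l ^ (l / 2) * (2 - l) ^ (1 - l / 2)) ∈ Set.Ioo (0:ℝ) 1 := by
    constructor
    · positivity
    · rw [div_lt_one (by positivity)]; exact hA
  -- Quantity 2
  have part2 : (1 + l) ^ (1 + l) / (l ^ l * (2:ℝ) ^ (1 + l)) ∈ Set.Ioo (0:ℝ) 1 := by
    have h1l : (0:ℝ) < 1 + l := by linarith
    have hden : (0:ℝ) < l ^ l * (2:ℝ) ^ (1 + l) := by positivity
    constructor
    · positivity
    · rw [div_lt_one hden]
      have hlog := key_g l hl0 hlne1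
      have : Real.log ((1 + l) ^ (1 + l)) < Real.log (l ^ l * (2:ℝ) ^ (1 + l)) := by
        rw [Real.log_rpow h1l, Real.log_mul (by positivity) (by positivity),
          Real.log_rpow hl0, Real.log_rpow (by norm_num)]
        linarith
      exact (Real.log_lt_log_iff (by positivity) hden).mp this
  -- Quantity 3
  have part3 : (3 - l) ^ (3 - l) / ((2 - l) ^ (2 - l) * (2:ℝ) ^ (3 - l)) ∈ Set.Ioo (0:ℝ) 1 := by
    have h3l : (0:ℝ) < 3 - l := by linarith
    have hden : (0:ℝ) < (2 - l) ^ (2 - l) * (2:ℝ) ^ (3 - l) := by positivity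
    constructor
    · positivity
    · rw [div_lt_one hden]
      have hlog := key_g (2 - l) hl2 (by intro h; apply hlne1; linarith)
      have e3 : (1:ℝ) + (2 - l) = 3 - l := by ring
      rw [e3] at hlog
      have : Real.log ((3 - l) ^ (3 - l)) < Real.log ((2 - l) ^ (2 - l) * (2:ℝ) ^ (3 - l)) := by
        rw [Real.log_rpow h3l, Real.log_mul (by positivity) (by positivity),
          Real.log_rpow hl2, Real.log_rpow (by norm_num)]
        linarith
      exact (Real.log_lt_log_iff (by positivity) hden).mp this
  exact ⟨part1, part2, part3⟩
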